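/- Let $0 = T_0 < T_1 < T_2 < \cdots$ be a strictly increasing sequence (on the set where finite) in $[0,\infty]$ with $T_n \to \infty$, let $(\xi_n)_{n\ge 0}$ be a sequence in a set $K$, and define $X_t = \xi_n$ for $t \in [T_n, T_{n+1})$. Fix $t \ge 0$, let $N_t = \#\{n \ge 1 : T_n \le t\}$, and for $x \in K$ define $X^{t,x}_s = x$ for $s \in [t, T_{N_t+1})$ and $X^{t,x}_s = \xi_n$ for $s\in[T_n,T_{n+1})$ with $n \ge N_t + 1$. Then for all $0 \le u \le t \le s$ and $x \in K$: $X^{t, X^{u,x}_t}_s = X^{u,x}_s$ (flow property). -/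
import Mathlib


/-- `Ncount T t` is the number of jump times `T n`, `n ≥ 1`, with `T n ≤ t`;
equivalently, the largest `n` with `T n ≤ t` (for `T` strictly increasing with `T 0 = 0`). -/
noncomputable def Ncount (T : ℕ → ℝ) (t : ℝ) : ℕ := sSup {n : ℕ | T n ≤ t}

/-- The marked point process restarted at time `t` from state `x`: it equals `x` on
`[t, T_{N_t + 1})` and follows the original jump sequence afterwards,
i.e. equals `ξ n` on `[T n, T (n+1))` for `n ≥ N_t + 1`. -/
noncomputable def Xflow {K : Type*} (T : ℕ → ℝ) (ξ : ℕ → K) (t : ℝ) (x : K) (s : ℝ) : K :=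
  if s < T (Ncount T t + 1) then x else ξ (Ncount T s)

lemma Ncount_bdd (T : ℕ → ℝ) (htend : Filter.Tendsto T Filter.atTop Filter.atTop)
    (t : ℝ) : BddAbove {n : ℕ | T n ≤ t} := by
  obtain ⟨m, hm⟩ := (htend.eventually_ge_atTop (t + 1)).exists_forall_of_atTop
  refine ⟨m, fun n hn => ?_⟩
  by_contra h
  have := hm n (le_of_lt (not_le.mp h))
  have : T n ≤ t := hn
  linarith [hm n (le_of_lt (not_le.mp ‹¬ n ≤ m›))]

lemma Ncount_spec (T : ℕ → ℝ) (hT0 : T 0 = 0)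
    (htend : Filter.Tendsto T Filter.atTop Filter.atTop) (t : ℝ) (ht : 0 ≤ t) :
    T (Ncount T t) ≤ t ∧ t < T (Ncount T t + 1) := by
  have hne : {n : ℕ | T n ≤ t}.Nonempty := ⟨0, by simpa [hT0] using ht⟩
  have hbdd := Ncount_bdd T htend t
  constructor
  · exact Nat.sSup_mem hne hbdd
  · by_contra h
    have : Ncount T t + 1 ∈ {n : ℕ | T n ≤ t} := not_lt.mp h
    have := le_csSup hbdd this
    exact absurd this (by simp [Ncount])

lemma Ncount_mono (T : ℕ → ℝ) (hT0 : T 0 = 0)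
    (htend : Filter.Tendsto T Filter.atTop Filter.atTop)
    {a b : ℝ} (ha : 0 ≤ a) (hab : a ≤ b) : Ncount T a ≤ Ncount T b := by
  have hne : {n : ℕ | T n ≤ a}.Nonempty := ⟨0, by simpa [hT0] using ha⟩
  exact csSup_le_csSup (Ncount_bdd T htend b) hne (fun n hn => le_trans hn hab)

/-- Flow property of the family of restarted marked point processes:
for `0 ≤ u ≤ t ≤ s`, `X^{t, X^{u,x}_t}_s = X^{u,x}_s`. -/
theorem stmt10 {K : Type*} (T : ℕ → ℝ) (ξ : ℕ → K)
    (hT0 : T 0 = 0) (hmono : StrictMono T)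
    (htend : Filter.Tendsto T Filter.atTop Filter.atTop)
    (u t s : ℝ) (x : K) (hu : 0 ≤ u) (hut : u ≤ t) (hts : t ≤ s) :
    Xflow T ξ t (Xflow T ξ u x t) s = Xflow T ξ u x s := by
  have ht : (0:ℝ) ≤ t := hu.trans hut
  have hs : (0:ℝ) ≤ s := ht.trans hts
  obtain ⟨hTt, hTt'⟩ := Ncount_spec T hT0 htend t ht
  obtain ⟨hTs, hTs'⟩ := Ncount_spec T hT0 htend s hs
  have hut' : Ncount T u ≤ Ncount T t := Ncount_mono T hT0 htend hu hut
  have hts' : Ncount T t ≤ Ncount T s := Ncount_mono T hT0 htend ht hts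
  unfold Xflow
  by_cases h1 : s < T (Ncount T t + 1)
  · -- then Ncount T s = Ncount T t
    have hNs : Ncount T s = Ncount T t := by
      have h2 : Ncount T s < Ncount T t + 1 := by
        rw [← hmono.lt_iff_lt]
        exact lt_of_le_of_lt hTs h1
      omega
    simp only [if_pos h1]
    by_cases h3 : t < T (Ncount T u + 1)
    · have hNu : Ncount T t = Ncount T u := by
        have h4 : Ncount T t < Ncount T u + 1 := by
          rw [← hmono.lt_iff_lt]
          exact lt_of_le_of_lt hTt h3
        omega
      rw [if_pos h3, if_pos (by rw [← hNu]; exact hNs ▸ h1)]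
    · have h5 : ¬ s < T (Ncount T u + 1) := by
        push_neg at h3 ⊢
        exact h3.trans hts
      rw [if_neg h3, if_neg h5, hNs]
  · have h6 : ¬ s < T (Ncount T u + 1) := by
      push_neg at h1 ⊢
      exact le_trans (hmono.monotone (by omega)) h1
    rw [if_neg h1, if_neg h6]
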